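/- Chow's strong law of large numbers for 1 ≤ p ≤ 2: let (Ω, ℱ, μ) be a probability space with a filtration (ℱ_n)_{n ≥ 1}, and let (Y_n)_{n ≥ 1} be a martingale difference sequence with respect to (ℱ_n) such that each |Y_n|^p is integrable, where p is a real number with 1 ≤ p ≤ 2. Let (a_n)_{n ≥ 1} be a non-decreasing sequence of positive real numbers with a_n → ∞. If Σ_{i=1}^∞ E[|Y_i|^p] / a_i^p < ∞, then (1/a_n) · Σ_{i=1}^n Y_i → 0 almost everywhere as n → ∞. -/

import Mathlib

open MeasureTheory Filter Topology Finset
open scoped NNReal ENNReal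

lemma chow_aux_abs_sign_le (x : ℝ) : |Real.sign x| ≤ 1 := by
  rcases Real.sign_apply_eq x with h | h | h <;> rw [h] <;> norm_num

lemma chow_aux_measurable_sign : Measurable Real.sign := by
  have : Real.sign = fun r : ℝ => if r < 0 then (-1 : ℝ) else if 0 < r then 1 else 0 := rfl
  rw [this]
  exact Measurable.ite (measurableSet_lt measurable_id measurable_const) measurable_const
    (Measurable.ite (measurableSet_lt measurable_const measurable_id) measurable_const
      measurable_const)

lemma chow_aux_rpow_subadd {c : ℝ} (hc0 : 0 ≤ c) (hc1 : c ≤ 1) {a b : ℝ} (ha : 0 ≤ a)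
    (hb : 0 ≤ b) : (a + b) ^ c ≤ a ^ c + b ^ c := by
  have h := NNReal.rpow_add_le_add_rpow (⟨a, ha⟩ : ℝ≥0) (⟨b, hb⟩ : ℝ≥0) hc0 hc1
  have := (NNReal.coe_le_coe).2 h
  push_cast [NNReal.coe_rpow] at this
  exact this

/-- Upper bound: `B^p - A^p ≤ p * B^(p-1) * (B - A)` for `0 ≤ A ≤ B`, `1 ≤ p`. -/
lemma chow_aux_rpow_sub_le {p : ℝ} (hp : 1 ≤ p) {A B : ℝ} (h0 : 0 ≤ A) (hAB : A ≤ B) :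
    B ^ p - A ^ p ≤ p * B ^ (p - 1) * (B - A) := by
  rcases eq_or_lt_of_le (h0.trans hAB) with hB | hB
  · have hA : A = 0 := le_antisymm (hAB.trans hB.symm.le) h0
    rw [← hB, hA, Real.zero_rpow (by linarith : p ≠ 0)]
    simp
  · have hs : -1 ≤ A / B - 1 := by
      have : 0 ≤ A / B := div_nonneg h0 hB.le
      linarith
    have hber := one_add_mul_self_le_rpow_one_add hs hp
    have h1 : 1 + (A / B - 1) = A / B := by ring
    rw [h1] at hber
    have hdiv : (A / B) ^ p = A ^ p / B ^ p := Real.div_rpow h0 hB.le p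
    rw [hdiv] at hber
    have hBp : (0 : ℝ) < B ^ p := Real.rpow_pos_of_pos hB p
    have hABp : 1 * B ^ p + p * (A / B - 1) * B ^ p ≤ A ^ p / B ^ p * B ^ p := by
      have := mul_le_mul_of_nonneg_right hber hBp.le
      linarith [this]
    have hcan : A ^ p / B ^ p * B ^ p = A ^ p := div_mul_cancel₀ _ hBp.ne'
    have hsplit : B ^ (p - 1) = B ^ p / B := by
      rw [Real.rpow_sub hB, Real.rpow_one]
    have hkey : (A / B - 1) * B ^ p = (A - B) * (B ^ p / B) := by
      field_simp
    rw [hcan] at hABp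
    rw [hsplit]
    nlinarith [hABp, hkey]

/-- Lower bound: `p * A^(p-1) * (B - A) ≤ B^p - A^p` for `0 ≤ A ≤ B`, `1 ≤ p`. -/
lemma chow_aux_le_rpow_sub {p : ℝ} (hp : 1 ≤ p) {A B : ℝ} (h0 : 0 ≤ A) (hAB : A ≤ B) :
    p * A ^ (p - 1) * (B - A) ≤ B ^ p - A ^ p := by
  rcases eq_or_lt_of_le h0 with hA | hA
  · rcases eq_or_lt_of_le hp with hp1 | hp1
    · rw [← hA, ← hp1]
      norm_num
    · rw [← hA, Real.zero_rpow (by linarith : p - 1 ≠ 0),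
        Real.zero_rpow (by linarith : p ≠ 0)]
      simpa using Real.rpow_nonneg (h0.trans hAB) p
  · have hs : -1 ≤ B / A - 1 := by
      have : 0 ≤ B / A := div_nonneg (h0.trans hAB) h0
      linarith
    have hber := one_add_mul_self_le_rpow_one_add hs hp
    have h1 : 1 + (B / A - 1) = B / A := by ring
    rw [h1] at hber
    have hdiv : (B / A) ^ p = B ^ p / A ^ p := Real.div_rpow (h0.trans hAB) h0 p
    rw [hdiv] at hber
    have hAp : (0 : ℝ) < A ^ p := Real.rpow_pos_of_pos hA p
    have hABp : 1 * A ^ p + p * (B / A - 1) * A ^ p ≤ B ^ p / A ^ p * A ^ p := by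
      have := mul_le_mul_of_nonneg_right hber hAp.le
      linarith [this]
    have hcan : B ^ p / A ^ p * A ^ p = B ^ p := div_mul_cancel₀ _ hAp.ne'
    have hsplit : A ^ (p - 1) = A ^ p / A := by
      rw [Real.rpow_sub hA, Real.rpow_one]
    have hkey : (B / A - 1) * A ^ p = (B - A) * (A ^ p / A) := by
      field_simp
    rw [hcan] at hABp
    rw [hsplit]
    nlinarith [hABp, hkey]

lemma chow_aux_rpow_succ {t : ℝ} (ht : 0 < t) (p : ℝ) : t ^ (p - 1) * t = t ^ p := by
  have h := (Real.rpow_add ht (p - 1) 1).symm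
  rw [Real.rpow_one] at h
  rw [h, show p - 1 + 1 = p by ring]

lemma chow_aux_key_pos {p : ℝ} (hp1 : 1 ≤ p) (hp2 : p ≤ 2) {x y : ℝ} (hx : 0 < x)
    (hxy : 2 * |y| < x) : (x + y) ^ p ≤ x ^ p + p * x ^ (p - 1) * y + 2 * |y| ^ p := by
  have hp0 : (0 : ℝ) < p := by linarith
  rcases le_or_gt 0 y with hy | hy
  · -- y ≥ 0
    have hyabs : |y| = y := abs_of_nonneg hy
    rw [hyabs] at hxy ⊢
    have h1 := chow_aux_rpow_sub_le hp1 hx.le (by linarith : x ≤ x + y)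
    have h2 : (x + y) ^ (p - 1) ≤ x ^ (p - 1) + y ^ (p - 1) :=
      chow_aux_rpow_subadd (by linarith) (by linarith) hx.le hy
    have h3 : y ^ (p - 1) * y = y ^ p := by
      rcases eq_or_lt_of_le hy with h | h
      · rw [← h, Real.zero_rpow (by linarith : p ≠ 0)]; ring
      · exact chow_aux_rpow_succ h p
    have h4 : p * y * (x + y) ^ (p - 1) ≤ p * y * (x ^ (p - 1) + y ^ (p - 1)) :=
      mul_le_mul_of_nonneg_left h2 (by positivity)
    have h5 : 0 ≤ y ^ p := Real.rpow_nonneg hy p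
    nlinarith [h1, h4, h3, h5, mul_nonneg (sub_nonneg.2 hp2) h5]
  · -- y < 0
    set z := -y with hz
    have hz0 : 0 < z := by simp only [hz]; linarith
    have hyabs : |y| = z := abs_of_neg hy
    rw [hyabs] at hxy ⊢
    have hu : 0 < x - z := by linarith
    have h1 := chow_aux_le_rpow_sub hp1 hu.le (by linarith : x - z ≤ x)
    have h2 : x ^ (p - 1) ≤ (x - z) ^ (p - 1) + z ^ (p - 1) := by
      have := chow_aux_rpow_subadd (by linarith : (0:ℝ) ≤ p - 1) (by linarith) hu.le hz0.le
      simpa using this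
    have h3 : z ^ (p - 1) * z = z ^ p := chow_aux_rpow_succ hz0 p
    have h4 : p * z * x ^ (p - 1) ≤ p * z * ((x - z) ^ (p - 1) + z ^ (p - 1)) :=
      mul_le_mul_of_nonneg_left h2 (by positivity)
    have h5 : 0 ≤ z ^ p := Real.rpow_nonneg hz0.le p
    have hy2 : y = -z := by rw [hz]; ring
    have hxy' : x + y = x - z := by rw [hy2]; ring
    rw [hxy', hy2]
    nlinarith [h1, h4, h3, h5, mul_nonneg (sub_nonneg.2 hp2) h5]

lemma chow_aux_key {p : ℝ} (hp1 : 1 ≤ p) (hp2 : p ≤ 2) (x y : ℝ) :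
    |x + y| ^ p ≤ |x| ^ p + p * Real.sign x * |x| ^ (p - 1) * y + 13 * |y| ^ p := by
  have hp0 : (0 : ℝ) < p := by linarith
  by_cases hy0 : y = 0
  · simp [hy0, Real.zero_rpow hp0.ne']
  have hyabs : 0 < |y| := abs_pos.2 hy0
  by_cases hcase : |x| ≤ 2 * |y|
  · -- small x case
    have h9 : |x + y| ^ p ≤ 9 * |y| ^ p := by
      have habs : |x + y| ≤ 3 * |y| := (abs_add_le x y).trans (by linarith)
      have h1 : |x + y| ^ p ≤ (3 * |y|) ^ p :=
        Real.rpow_le_rpow (abs_nonneg _) habs hp0.le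
      have h2 : (3 * |y|) ^ p = 3 ^ p * |y| ^ p :=
        Real.mul_rpow (by norm_num) (abs_nonneg _)
      have h3 : (3 : ℝ) ^ p ≤ 9 := by
        have := Real.rpow_le_rpow_of_exponent_le (by norm_num : (1:ℝ) ≤ 3) hp2
        have h32 : (3 : ℝ) ^ (2 : ℝ) = 9 := by
          rw [show (2:ℝ) = ((2:ℕ):ℝ) by norm_num, Real.rpow_natCast]; norm_num
        linarith
      have h4 : 3 ^ p * |y| ^ p ≤ 9 * |y| ^ p :=
        mul_le_mul_of_nonneg_right h3 (Real.rpow_nonneg (abs_nonneg _) p)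
      linarith
    have h4 : |p * Real.sign x * |x| ^ (p - 1) * y| ≤ 4 * |y| ^ p := by
      have e1 : |p * Real.sign x * |x| ^ (p - 1) * y|
          = p * |Real.sign x| * |x| ^ (p - 1) * |y| := by
        rw [abs_mul, abs_mul, abs_mul, abs_of_pos hp0,
          abs_of_nonneg (Real.rpow_nonneg (abs_nonneg x) _)]
      have h0x : 0 ≤ |x| ^ (p - 1) := Real.rpow_nonneg (abs_nonneg _) _
      have e6 : 0 ≤ |y| ^ (p - 1) := Real.rpow_nonneg (abs_nonneg _) _
      have e2 : |x| ^ (p - 1) ≤ (2 * |y|) ^ (p - 1) :=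
        Real.rpow_le_rpow (abs_nonneg x) hcase (by linarith)
      have e3 : (2 * |y|) ^ (p - 1) = 2 ^ (p - 1) * |y| ^ (p - 1) :=
        Real.mul_rpow (by norm_num) (abs_nonneg _)
      have e4 : (2 : ℝ) ^ (p - 1) ≤ 2 := by
        have := Real.rpow_le_rpow_of_exponent_le (by norm_num : (1:ℝ) ≤ 2)
          (by linarith : p - 1 ≤ 1)
        rwa [Real.rpow_one] at this
      have m0 : |x| ^ (p - 1) ≤ 2 * |y| ^ (p - 1) := by nlinarith [e2, e3, e4, e6]
      have e5 : |y| ^ (p - 1) * |y| = |y| ^ p := chow_aux_rpow_succ hyabs p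
      have hps : p * |Real.sign x| ≤ 2 := by
        nlinarith [chow_aux_abs_sign_le x, abs_nonneg (Real.sign x)]
      have s1 : p * |Real.sign x| * |x| ^ (p - 1) ≤ 2 * (2 * |y| ^ (p - 1)) := by
        nlinarith [mul_le_mul_of_nonneg_right hps h0x, m0]
      have s2 := mul_le_mul_of_nonneg_right s1 (abs_nonneg y)
      rw [e1]
      nlinarith [s2, e5]
    have := neg_abs_le (p * Real.sign x * |x| ^ (p - 1) * y)
    have hxp : 0 ≤ |x| ^ p := Real.rpow_nonneg (abs_nonneg _) p
    linarith
  · push_neg at hcase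
    rcases lt_trichotomy x 0 with hx | hx | hx
    · -- x < 0 : apply key_pos to (-x, -y)
      have hxabs : |x| = -x := abs_of_neg hx
      have h2 : 2 * |(-y)| < -x := by rw [abs_neg]; linarith
      have hkp := chow_aux_key_pos hp1 hp2 (by linarith : (0:ℝ) < -x) h2
      have hsum : x + y < 0 := by
        have : y ≤ |y| := le_abs_self y
        nlinarith [hcase, hxabs, this]
      have e1 : |x + y| = -x + -y := by rw [abs_of_neg hsum]; ring
      rw [← e1, abs_neg, ← hxabs] at hkp
      have hsx : Real.sign x = -1 := Real.sign_of_neg hx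
      rw [hsx]
      have hyp : 0 ≤ |y| ^ p := Real.rpow_nonneg (abs_nonneg _) p
      nlinarith [hkp, hyp]
    · exfalso
      rw [hx, abs_zero] at hcase
      linarith [abs_nonneg y]
    · have hxabs : |x| = x := abs_of_pos hx
      rw [hxabs] at hcase
      have hkp := chow_aux_key_pos hp1 hp2 hx hcase
      have hsum : 0 < x + y := by
        have : -|y| ≤ y := neg_abs_le y
        linarith
      have hsx : Real.sign x = 1 := Real.sign_of_pos hx
      rw [abs_of_pos hsum, hsx, hxabs]
      have hyp : 0 ≤ |y| ^ p := Real.rpow_nonneg (abs_nonneg _) p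
      nlinarith [hkp, hyp]

lemma chow_aux_kronecker (b : ℕ → ℝ) (hb : ∀ k, 0 < b k) (hmono : Monotone b)
    (htop : Tendsto b atTop atTop) (z : ℕ → ℝ) (L : ℝ)
    (h : Tendsto (fun n => ∑ k ∈ range n, (b k)⁻¹ * z k) atTop (𝓝 L)) :
    Tendsto (fun n => (b n)⁻¹ * ∑ k ∈ range (n + 1), z k) atTop (𝓝 0) := by
  set t : ℕ → ℝ := fun n => ∑ k ∈ range n, (b k)⁻¹ * z k with ht
  have hzk : ∀ k, z k = b k * (t (k + 1) - t k) := by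
    intro k
    simp only [ht, Finset.sum_range_succ, add_sub_cancel_left]
    have hc : (b k)⁻¹ * b k = 1 := inv_mul_cancel₀ (hb k).ne'
    linear_combination (-(z k)) * hc
  have habel : ∀ n, ∑ k ∈ range (n + 1), z k
      = b n * t (n + 1) - ∑ k ∈ range n, (b (k + 1) - b k) * t (k + 1) := by
    intro n
    induction n with
    | zero =>
      have ht0 : t 0 = 0 := by simp [ht]
      simp only [zero_add, Finset.range_one, Finset.sum_singleton, Finset.range_zero,
        Finset.sum_empty, sub_zero]
      rw [hzk 0, ht0]; ring
    | succ n ih =>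
      rw [Finset.sum_range_succ, ih,
        Finset.sum_range_succ (fun k => (b (k + 1) - b k) * t (k + 1)) n, hzk (n + 1)]
      ring
  set E : ℕ → ℝ := fun n => ∑ k ∈ range n, (b (k + 1) - b k) * (t (k + 1) - L) with hE
  have hsplit : ∀ n, ∑ k ∈ range n, (b (k + 1) - b k) * t (k + 1)
      = E n + (b n - b 0) * L := by
    intro n
    have h1 : ∑ k ∈ range n, (b (k + 1) - b k) = b n - b 0 := Finset.sum_range_sub b n
    have h2 : ∀ k, (b (k + 1) - b k) * t (k + 1)
        = (b (k + 1) - b k) * (t (k + 1) - L) + (b (k + 1) - b k) * L := fun k => by ring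
    rw [Finset.sum_congr rfl (fun k _ => h2 k), Finset.sum_add_distrib, ← Finset.sum_mul, h1]
  -- E is little-o of b
  have hinv : Tendsto (fun n => (b n)⁻¹) atTop (𝓝 0) := tendsto_inv_atTop_zero.comp htop
  have hfo : (fun k => (b (k + 1) - b k) * (t (k + 1) - L)) =o[atTop]
      (fun k => b (k + 1) - b k) := by
    rw [Asymptotics.isLittleO_iff]
    intro c hc
    have hte : Tendsto (fun k => t (k + 1)) atTop (𝓝 L) := h.comp (tendsto_add_atTop_nat 1)
    have : ∀ᶠ k in atTop, |t (k + 1) - L| ≤ c := by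
      obtain ⟨N, hN⟩ := Metric.tendsto_atTop.1 hte c hc
      filter_upwards [eventually_ge_atTop N] with k hk
      have := hN k hk
      rw [Real.dist_eq] at this
      exact this.le
    filter_upwards [this] with k hk
    have hbk : 0 ≤ b (k + 1) - b k := sub_nonneg.2 (hmono (Nat.le_succ k))
    rw [Real.norm_eq_abs, Real.norm_eq_abs, abs_mul, abs_of_nonneg hbk]
    calc (b (k + 1) - b k) * |t (k + 1) - L| ≤ (b (k + 1) - b k) * c :=
          mul_le_mul_of_nonneg_left hk hbk
      _ = c * (b (k + 1) - b k) := mul_comm _ _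
  have hgtop : Tendsto (fun n => ∑ k ∈ range n, (b (k + 1) - b k)) atTop atTop := by
    have : Tendsto (fun n => b n - b 0) atTop atTop :=
      tendsto_atTop_add_const_right atTop (-b 0) htop |>.congr (fun n => by ring)
    exact this.congr fun n => (Finset.sum_range_sub b n).symm
  have hEo : E =o[atTop] b := by
    have h1 := hfo.sum_range (fun k => sub_nonneg.2 (hmono (Nat.le_succ k))) hgtop
    have h2 : (fun n => ∑ k ∈ range n, (b (k + 1) - b k)) =O[atTop] b := by
      rw [Asymptotics.isBigO_iff]
      refine ⟨1, Eventually.of_forall fun n => ?_⟩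
      rw [Finset.sum_range_sub b n, Real.norm_eq_abs, Real.norm_eq_abs, one_mul,
        abs_of_nonneg (sub_nonneg.2 (hmono (Nat.zero_le n))), abs_of_pos (hb n)]
      linarith [hb 0]
    exact (h1.trans_isBigO h2).congr_left fun n => rfl
  have hEdiv : Tendsto (fun n => E n * (b n)⁻¹) atTop (𝓝 0) := by
    have := hEo.tendsto_div_nhds_zero
    exact this.congr fun n => (div_eq_mul_inv _ _)
  -- the weighted average tends to L
  have hW : Tendsto (fun n => (b n)⁻¹ * ∑ k ∈ range n, (b (k + 1) - b k) * t (k + 1))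
      atTop (𝓝 L) := by
    have l2 : Tendsto (fun n => (1 - b 0 * (b n)⁻¹) * L) atTop (𝓝 L) := by
      have := ((tendsto_const_nhds (x := (1:ℝ))).sub
        ((tendsto_const_nhds (x := b 0)).mul hinv)).mul (tendsto_const_nhds (x := L))
      simpa using this
    have hid : ∀ n, (b n)⁻¹ * ∑ k ∈ range n, (b (k + 1) - b k) * t (k + 1)
        = E n * (b n)⁻¹ + (1 - b 0 * (b n)⁻¹) * L := by
      intro n
      have hc : (b n)⁻¹ * b n = 1 := inv_mul_cancel₀ (hb n).ne'
      rw [hsplit n]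
      linear_combination L * hc
    have := hEdiv.add l2
    rw [zero_add] at this
    exact this.congr fun n => (hid n).symm
  have hte : Tendsto (fun n => t (n + 1)) atTop (𝓝 L) := h.comp (tendsto_add_atTop_nat 1)
  have hfinal := hte.sub hW
  rw [sub_self] at hfinal
  refine hfinal.congr fun n => ?_
  rw [habel n, mul_sub, inv_mul_cancel_left₀ (hb n).ne']

lemma chow_aux_young {p : ℝ} (hp : 1 ≤ p) {a b : ℝ} (ha : 0 ≤ a) (hb : 0 ≤ b) :
    a ^ (p - 1) * b ≤ a ^ p + b ^ p := by
  have hap : 0 ≤ a ^ p := Real.rpow_nonneg ha p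
  have hbp : 0 ≤ b ^ p := Real.rpow_nonneg hb p
  rcases le_total b a with h | h
  · rcases eq_or_lt_of_le ha with h0 | h0
    · have hb0 : b = 0 := le_antisymm (h.trans h0.symm.le) hb
      rw [hb0, mul_zero]; positivity
    · have h1 : a ^ (p - 1) * b ≤ a ^ (p - 1) * a :=
        mul_le_mul_of_nonneg_left h (Real.rpow_nonneg ha _)
      rw [chow_aux_rpow_succ h0 p] at h1
      linarith
  · rcases eq_or_lt_of_le hb with h0 | h0
    · have ha0 : a = 0 := le_antisymm (h.trans h0.symm.le) ha
      rw [← h0, mul_zero]; positivity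
    · have h1 : a ^ (p - 1) ≤ b ^ (p - 1) := Real.rpow_le_rpow ha h (by linarith)
      have h2 : a ^ (p - 1) * b ≤ b ^ (p - 1) * b := mul_le_mul_of_nonneg_right h1 hb
      rw [chow_aux_rpow_succ h0 p] at h2
      linarith

lemma chow_aux_reindex (f : ℕ → ℝ) (n : ℕ) :
    ∑ i ∈ Finset.Icc 1 n, f i = ∑ k ∈ range n, f (k + 1) := by
  induction n with
  | zero => simp
  | succ n ih =>
    rw [Finset.sum_Icc_succ_top (by omega : 1 ≤ n + 1), Finset.sum_range_succ, ih]

/-- Chow's strong law of large numbers for `1 ≤ p ≤ 2`. -/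
theorem chow_strong_law_of_large_numbers_p_le_two
    {Ω : Type*} {m0 : MeasurableSpace Ω} {μ : Measure Ω} [IsProbabilityMeasure μ]
    (ℱ : Filtration ℕ m0) (p : ℝ) (hp1 : 1 ≤ p) (hp2 : p ≤ 2) (Y : ℕ → Ω → ℝ)
    (hint : ∀ n, 1 ≤ n → Integrable (Y n) μ)
    (hadp : ∀ n, 1 ≤ n → StronglyMeasurable[ℱ n] (Y n))
    (hmds : ∀ n, 2 ≤ n → μ[Y n | ℱ (n - 1)] =ᵐ[μ] 0)
    (hYp : ∀ n, 1 ≤ n → Integrable (fun ω => |Y n ω| ^ p) μ)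
    (a : ℕ → ℝ) (hapos : ∀ n, 1 ≤ n → 0 < a n)
    (hamono : ∀ i j, 1 ≤ i → i ≤ j → a i ≤ a j)
    (hatop : Tendsto a atTop atTop)
    (hsum : Summable fun i : ℕ => (∫ ω, |Y (i + 1) ω| ^ p ∂μ) / a (i + 1) ^ p) :
    ∀ᵐ ω ∂μ, Tendsto (fun n => (a n)⁻¹ * ∑ i ∈ Finset.Icc 1 n, Y i ω) atTop (𝓝 0) := by
  have hp0 : (0 : ℝ) < p := by linarith
  set q : ℝ≥0∞ := ENNReal.ofReal p with hq
  have hq0 : q ≠ 0 := ne_of_gt (ENNReal.ofReal_pos.2 hp0)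
  have hqtop : q ≠ ∞ := ENNReal.ofReal_ne_top
  have hqtoReal : q.toReal = p := ENNReal.toReal_ofReal hp0.le
  set Z : ℕ → Ω → ℝ := fun i ω => (a i)⁻¹ * Y i ω with hZ
  set S : ℕ → Ω → ℝ := fun n ω => ∑ i ∈ Finset.Icc 1 n, Z i ω with hS
  -- basic measurability and integrability
  have hZmeas : ∀ i, 1 ≤ i → StronglyMeasurable[ℱ i] (Z i) := fun i hi =>
    (hadp i hi).const_mul _
  have hZint : ∀ i, 1 ≤ i → Integrable (Z i) μ := fun i hi => (hint i hi).const_mul _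
  have hYLp : ∀ i, 1 ≤ i → MemLp (Y i) q μ := by
    intro i hi
    have hmeas : AEStronglyMeasurable (Y i) μ :=
      ((hadp i hi).mono (ℱ.le i)).aestronglyMeasurable
    have h1 : MemLp (fun x => ‖Y i x‖ ^ q.toReal) (q / q) μ := by
      rw [ENNReal.div_self hq0 hqtop, memLp_one_iff_integrable]
      simpa [Real.norm_eq_abs, hqtoReal] using hYp i hi
    exact (memLp_norm_rpow_iff hmeas hq0 hqtop).1 h1
  have hZLp : ∀ i, 1 ≤ i → MemLp (Z i) q μ := fun i hi => (hYLp i hi).const_mul _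
  have hSLp : ∀ n, MemLp (S n) q μ := by
    intro n
    exact memLp_finset_sum _ fun i hi => hZLp i (Finset.mem_Icc.1 hi).1
  have hSint : ∀ n, Integrable (S n) μ := fun n =>
    (hSLp n).integrable (ENNReal.one_le_ofReal.2 hp1)
  have hSp_int : ∀ n, Integrable (fun ω => |S n ω| ^ p) μ := by
    intro n
    have := (hSLp n).integrable_norm_rpow hq0 hqtop
    simpa [Real.norm_eq_abs, hqtoReal] using this
  have hZp_int : ∀ i, 1 ≤ i → Integrable (fun ω => |Z i ω| ^ p) μ := by
    intro i hi
    have := (hZLp i hi).integrable_norm_rpow hq0 hqtop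
    simpa [Real.norm_eq_abs, hqtoReal] using this
  have hSmeas : ∀ n, StronglyMeasurable[ℱ n] (S n) := by
    intro n
    apply Finset.stronglyMeasurable_fun_sum
    intro i hi
    exact (hZmeas i (Finset.mem_Icc.1 hi).1).mono (ℱ.mono (Finset.mem_Icc.1 hi).2)
  -- conditional expectation of increments vanishes
  have hcondZ : ∀ n, 1 ≤ n → μ[Z (n + 1)|ℱ n] =ᵐ[μ] 0 := by
    intro n hn
    have h1 : μ[Y (n + 1)|ℱ n] =ᵐ[μ] 0 := by
      have := hmds (n + 1) (by omega)
      simpa using this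
    have h2 : Z (n + 1) = (a (n + 1))⁻¹ • Y (n + 1) := by
      funext ω; simp [hZ, smul_eq_mul]
    rw [h2]
    refine (condExp_smul _ _ _).trans ?_
    filter_upwards [h1] with ω hω
    simp only [Pi.smul_apply, hω, Pi.zero_apply, smul_zero]
  -- cross terms vanish
  have hgZ_int : ∀ n, Integrable
      (fun ω => (p * Real.sign (S n ω) * |S n ω| ^ (p - 1)) * Z (n + 1) ω) μ := by
    intro n
    have hbound : ∀ ω, ‖(p * Real.sign (S n ω) * |S n ω| ^ (p - 1)) * Z (n + 1) ω‖
        ≤ p * (|S n ω| ^ p + |Z (n + 1) ω| ^ p) := by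
      intro ω
      have hy := chow_aux_young hp1 (abs_nonneg (S n ω)) (abs_nonneg (Z (n + 1) ω))
      have h1 : ‖(p * Real.sign (S n ω) * |S n ω| ^ (p - 1)) * Z (n + 1) ω‖
          = p * |Real.sign (S n ω)| * |S n ω| ^ (p - 1) * |Z (n + 1) ω| := by
        rw [Real.norm_eq_abs, abs_mul, abs_mul, abs_mul, abs_of_pos hp0,
          abs_of_nonneg (Real.rpow_nonneg (abs_nonneg _) _)]
      rw [h1]
      have hs := chow_aux_abs_sign_le (S n ω)
      have ht0 : 0 ≤ |S n ω| ^ (p - 1) * |Z (n + 1) ω| :=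
        mul_nonneg (Real.rpow_nonneg (abs_nonneg _) _) (abs_nonneg _)
      nlinarith [mul_le_mul_of_nonneg_left hy hp0.le,
        mul_nonneg (mul_nonneg hp0.le (sub_nonneg.2 hs)) ht0]
    have hmeasmul : AEStronglyMeasurable
        (fun ω => (p * Real.sign (S n ω) * |S n ω| ^ (p - 1)) * Z (n + 1) ω) μ := by
      have hF : Measurable fun x : ℝ => p * Real.sign x * |x| ^ (p - 1) :=
        (measurable_const.mul chow_aux_measurable_sign).mul
          ((Real.continuous_rpow_const (by linarith)).measurable.comp measurable_abs)
      have h1 : AEStronglyMeasurable (fun ω => p * Real.sign (S n ω) * |S n ω| ^ (p - 1)) μ :=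
        ((hF.comp ((hSmeas n).mono (ℱ.le n)).measurable).stronglyMeasurable).aestronglyMeasurable
      by_cases hn : 1 ≤ n + 1
      · exact h1.mul ((hZmeas (n + 1) hn).mono (ℱ.le _)).aestronglyMeasurable
      · omega
    exact Integrable.mono' (((hSp_int n).add (hZp_int (n + 1) (by omega))).const_mul p)
      hmeasmul (Eventually.of_forall hbound)
  have hcross : ∀ n, ∫ ω, (p * Real.sign (S n ω) * |S n ω| ^ (p - 1)) * Z (n + 1) ω ∂μ = 0 := by
    intro n
    rcases Nat.eq_zero_or_pos n with rfl | hn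
    · have h0 : ∀ ω, (p * Real.sign (S 0 ω) * |S 0 ω| ^ (p - 1)) * Z 1 ω = 0 := by
        intro ω
        have : S 0 ω = 0 := by simp [hS]
        rw [this, Real.sign_zero]
        ring
      simp_rw [h0]
      exact integral_zero _ _
    · set g : Ω → ℝ := fun ω => p * Real.sign (S n ω) * |S n ω| ^ (p - 1) with hg
      have hgmeas : StronglyMeasurable[ℱ n] g := by
        have hF : Measurable fun x : ℝ => p * Real.sign x * |x| ^ (p - 1) :=
          (measurable_const.mul chow_aux_measurable_sign).mul
            ((Real.continuous_rpow_const (by linarith)).measurable.comp measurable_abs)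
        exact (hF.comp (hSmeas n).measurable).stronglyMeasurable
      have hint_gZ : Integrable (g * Z (n + 1)) μ := hgZ_int n
      have h1 : μ[g * Z (n + 1)|ℱ n] =ᵐ[μ] g * μ[Z (n + 1)|ℱ n] :=
        condExp_mul_of_stronglyMeasurable_left hgmeas hint_gZ (hZint (n + 1) (by omega))
      have h2 : μ[g * Z (n + 1)|ℱ n] =ᵐ[μ] 0 := by
        refine h1.trans ?_
        filter_upwards [hcondZ n hn] with ω hω
        simp only [Pi.mul_apply, hω, Pi.zero_apply, mul_zero]
      have h3 : ∫ ω, (g * Z (n + 1)) ω ∂μ = ∫ ω, (μ[g * Z (n + 1)|ℱ n]) ω ∂μ :=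
        (integral_condExp (ℱ.le n)).symm
      calc ∫ ω, (p * Real.sign (S n ω) * |S n ω| ^ (p - 1)) * Z (n + 1) ω ∂μ
          = ∫ ω, (g * Z (n + 1)) ω ∂μ := rfl
        _ = ∫ ω, (μ[g * Z (n + 1)|ℱ n]) ω ∂μ := h3
        _ = ∫ ω, (0 : Ω → ℝ) ω ∂μ := integral_congr_ae h2
        _ = 0 := by simp
  -- moment bound by induction
  have hmom : ∀ n, ∫ ω, |S n ω| ^ p ∂μ
      ≤ 13 * ∑ i ∈ range n, ∫ ω, |Z (i + 1) ω| ^ p ∂μ := by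
    intro n
    induction n with
    | zero =>
      have h0 : ∀ ω, |S 0 ω| ^ p = 0 := by
        intro ω
        have : S 0 ω = 0 := by simp [hS]
        rw [this, abs_zero, Real.zero_rpow hp0.ne']
      simp_rw [h0]
      simp
    | succ n ih =>
      have hpt : ∀ ω, |S (n + 1) ω| ^ p ≤ |S n ω| ^ p
          + (p * Real.sign (S n ω) * |S n ω| ^ (p - 1)) * Z (n + 1) ω
          + 13 * |Z (n + 1) ω| ^ p := by
        intro ω
        have hSsucc : S (n + 1) ω = S n ω + Z (n + 1) ω := by
          simp only [hS]
          rw [Finset.sum_Icc_succ_top (by omega : 1 ≤ n + 1)]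
        rw [hSsucc]
        have := chow_aux_key hp1 hp2 (S n ω) (Z (n + 1) ω)
        linarith
      have hI1 := hSp_int n
      have hI2 := hgZ_int n
      have hI3 : Integrable (fun ω => 13 * |Z (n + 1) ω| ^ p) μ :=
        (hZp_int (n + 1) (by omega)).const_mul (13 : ℝ)
      have hI23 : Integrable (fun ω => (p * Real.sign (S n ω) * |S n ω| ^ (p - 1)) * Z (n + 1) ω
          + 13 * |Z (n + 1) ω| ^ p) μ := hI2.add hI3
      have hIR : Integrable (fun ω => |S n ω| ^ p
          + ((p * Real.sign (S n ω) * |S n ω| ^ (p - 1)) * Z (n + 1) ω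
          + 13 * |Z (n + 1) ω| ^ p)) μ := hI1.add hI23
      have hle := integral_mono (hSp_int (n + 1)) hIR fun ω => by
        have := hpt ω; dsimp only; linarith
      have hR : ∫ ω, (|S n ω| ^ p
          + ((p * Real.sign (S n ω) * |S n ω| ^ (p - 1)) * Z (n + 1) ω
          + 13 * |Z (n + 1) ω| ^ p)) ∂μ
          = ∫ ω, |S n ω| ^ p ∂μ
          + (∫ ω, (p * Real.sign (S n ω) * |S n ω| ^ (p - 1)) * Z (n + 1) ω ∂μ
          + 13 * ∫ ω, |Z (n + 1) ω| ^ p ∂μ) := by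
        rw [integral_add hI1 hI23, integral_add hI2 hI3, integral_const_mul]
      rw [hR, hcross n] at hle
      rw [Finset.sum_range_succ]
      linarith
  -- uniform bound
  have hZint_eq : ∀ i : ℕ, ∫ ω, |Z (i + 1) ω| ^ p ∂μ
      = (∫ ω, |Y (i + 1) ω| ^ p ∂μ) / a (i + 1) ^ p := by
    intro i
    have hai : 0 < a (i + 1) := hapos (i + 1) (by omega)
    have h1 : ∀ ω, |Z (i + 1) ω| ^ p = (a (i + 1) ^ p)⁻¹ * |Y (i + 1) ω| ^ p := by
      intro ω
      simp only [hZ]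
      rw [abs_mul, abs_of_pos (inv_pos.2 hai),
        Real.mul_rpow (inv_nonneg.2 hai.le) (abs_nonneg _), Real.inv_rpow hai.le]
    simp_rw [h1]
    rw [integral_const_mul]
    ring
  set C : ℝ := ∑' i : ℕ, (∫ ω, |Y (i + 1) ω| ^ p ∂μ) / a (i + 1) ^ p with hC
  have hterm_nn : ∀ i : ℕ, 0 ≤ (∫ ω, |Y (i + 1) ω| ^ p ∂μ) / a (i + 1) ^ p := fun i =>
    div_nonneg (integral_nonneg fun ω => Real.rpow_nonneg (abs_nonneg _) _)
      (Real.rpow_nonneg (hapos (i + 1) (by omega)).le _)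
  have hmomC : ∀ n, ∫ ω, |S n ω| ^ p ∂μ ≤ 13 * C := by
    intro n
    refine (hmom n).trans ?_
    have heq : ∑ i ∈ range n, ∫ ω, |Z (i + 1) ω| ^ p ∂μ
        = ∑ i ∈ range n, (∫ ω, |Y (i + 1) ω| ^ p ∂μ) / a (i + 1) ^ p :=
      Finset.sum_congr rfl fun i _ => hZint_eq i
    rw [heq]
    exact mul_le_mul_of_nonneg_left
      (Summable.sum_le_tsum (range n) (fun i _ => hterm_nn i) hsum) (by norm_num)
  set R : ℝ≥0 := ((13 * C) ^ p⁻¹).toNNReal with hR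
  have hbdd : ∀ k : ℕ, eLpNorm (S (k + 1)) 1 μ ≤ (R : ℝ≥0∞) := by
    intro k
    have h1 : eLpNorm (S (k + 1)) 1 μ ≤ eLpNorm (S (k + 1)) q μ :=
      eLpNorm_le_eLpNorm_of_exponent_le (ENNReal.one_le_ofReal.2 hp1)
        (hSLp (k + 1)).aestronglyMeasurable
    have h2 : eLpNorm (S (k + 1)) q μ
        = ENNReal.ofReal ((∫ ω, ‖S (k + 1) ω‖ ^ p ∂μ) ^ p⁻¹) := by
      have := (hSLp (k + 1)).eLpNorm_eq_integral_rpow_norm hq0 hqtop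
      rwa [hqtoReal] at this
    refine h1.trans ?_
    rw [h2]
    have h3 : (∫ ω, ‖S (k + 1) ω‖ ^ p ∂μ) ^ p⁻¹ ≤ (13 * C) ^ p⁻¹ := by
      apply Real.rpow_le_rpow (integral_nonneg fun ω => Real.rpow_nonneg (norm_nonneg _) _)
        ?_ (inv_nonneg.2 hp0.le)
      simpa [Real.norm_eq_abs] using hmomC (k + 1)
    exact ENNReal.ofReal_le_ofReal h3
  -- martingale convergence
  set 𝒢 : Filtration ℕ m0 :=
    { seq := fun n => ℱ (n + 1)
      mono' := fun i j hij => ℱ.mono (by omega)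
      le' := fun n => ℱ.le (n + 1) } with h𝒢
  have hadp' : StronglyAdapted 𝒢 fun k => S (k + 1) := fun k => hSmeas (k + 1)
  have hmstep : ∀ i : ℕ, S (i + 1) =ᵐ[μ] μ[S (i + 1 + 1)|ℱ (i + 1)] := by
    intro i
    have hsum2 : S (i + 1 + 1) = S (i + 1) + Z (i + 1 + 1) := by
      funext ω
      simp only [hS, Pi.add_apply]
      rw [Finset.sum_Icc_succ_top (by omega : 1 ≤ i + 1 + 1)]
    rw [hsum2]
    have h1 := condExp_add (m := ℱ (i + 1)) (hSint (i + 1)) (hZint (i + 1 + 1) (by omega))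
    have h2 : μ[S (i + 1)|ℱ (i + 1)] = S (i + 1) :=
      condExp_of_stronglyMeasurable (ℱ.le _) (hSmeas (i + 1)) (hSint (i + 1))
    refine EventuallyEq.symm (h1.trans ?_)
    rw [h2]
    filter_upwards [hcondZ (i + 1) (by omega)] with ω hω
    simp only [Pi.add_apply, hω, Pi.zero_apply, add_zero]
  have hmart : Martingale (fun k => S (k + 1)) 𝒢 μ :=
    martingale_nat hadp' (fun i => hSint (i + 1)) fun i => hmstep i
  have hlim := hmart.submartingale.ae_tendsto_limitProcess hbdd
  -- conclusion via Kronecker's lemma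
  filter_upwards [hlim] with ω hω
  set L : ℝ := 𝒢.limitProcess (fun k => S (k + 1)) μ ω with hL
  have hSten : Tendsto (fun n => S n ω) atTop (𝓝 L) := (tendsto_add_atTop_iff_nat 1).1 hω
  have hsum_eq : ∀ n, S n ω = ∑ k ∈ range n, (a (k + 1))⁻¹ * Y (k + 1) ω := by
    intro n
    simp only [hS, hZ]
    exact chow_aux_reindex (fun i => (a i)⁻¹ * Y i ω) n
  have hk := chow_aux_kronecker (fun k => a (k + 1)) (fun k => hapos (k + 1) (by omega))
    (fun i j hij => hamono (i + 1) (j + 1) (by omega) (by omega))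
    (hatop.comp (tendsto_add_atTop_nat 1)) (fun k => Y (k + 1) ω) L
    (hSten.congr fun n => hsum_eq n)
  have hk' : Tendsto (fun n => (a (n + 1))⁻¹ * ∑ i ∈ Finset.Icc 1 (n + 1), Y i ω)
      atTop (𝓝 0) := by
    refine hk.congr fun n => ?_
    rw [chow_aux_reindex (fun i => Y i ω) (n + 1)]
  exact (tendsto_add_atTop_iff_nat 1).1 hk'
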